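/- In R = MvPowerSeries (Fin m) ℚ one has the identity Td · (Σ_{r=1}^m (−1)^r · r · ch_r) = − Σ_{j=1}^m (∏_{k ≠ j} X_k) · h(X_j). -/

import Mathlib

open Finset

noncomputable section

/-- The element of `MvPowerSeries (Fin m) ℚ` obtained by substituting the variable `X j`
into a one-variable formal power series `f`. -/
def substAt {m : ℕ} (j : Fin m) (f : PowerSeries ℚ) : MvPowerSeries (Fin m) ℚ :=
  fun n => if n.support ⊆ {j} then PowerSeries.coeff (n j) f else 0

/-- The one-variable power series `exp (−X) = Σ_{n ≥ 0} (−X)^n / n!`. -/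
def expNeg : PowerSeries ℚ := PowerSeries.mk fun n => (-1) ^ n / n.factorial

/-- `ch m r = Σ_{S ⊆ Fin m, |S| = r} ∏_{j ∈ S} exp (−X j)`, the `r`-th Chern character
term of the exterior powers, written in Chern roots. -/
def ch (m : ℕ) (r : ℕ) : MvPowerSeries (Fin m) ℚ :=
  ∑ S ∈ Finset.powersetCard r (Finset.univ : Finset (Fin m)),
    ∏ j ∈ S, substAt j expNeg

/-- `esymm m k = Σ_{S ⊆ Fin m, |S| = k} ∏_{j ∈ S} X j`, the `k`-th elementary symmetric
polynomial of the variables, as a multivariate power series. -/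
def esymm (m : ℕ) (k : ℕ) : MvPowerSeries (Fin m) ℚ :=
  ∑ S ∈ Finset.powersetCard k (Finset.univ : Finset (Fin m)),
    ∏ j ∈ S, MvPowerSeries.X j

/-- The Todd class `Td = ∏_{j=1}^m φ(X_j)` written in Chern roots, where `φ` is the
Todd series `X/(1 − e^{−X})`. -/
def Td (m : ℕ) (φ : PowerSeries ℚ) : MvPowerSeries (Fin m) ℚ :=
  ∏ j : Fin m, substAt j φ

/-- `Td′ = Σ_{j=1}^m φ′(X_j) · ∏_{k ≠ j} φ(X_k)`, the class
`Td′(A) = ∂/∂t Td(A + t·Id)|_{t=0}` written in Chern roots. -/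
def Td' (m : ℕ) (φ : PowerSeries ℚ) : MvPowerSeries (Fin m) ℚ :=
  ∑ j : Fin m, substAt j (PowerSeries.derivative (R := ℚ) φ) *
    ∏ k ∈ Finset.univ.erase j, substAt k φ

/-- Two multivariate power series agree in total degree `≤ p`: their coefficients at every
multi-exponent of total degree `≤ p` coincide. -/
def AgreeUpTo (m p : ℕ) (F G : MvPowerSeries (Fin m) ℚ) : Prop :=
  ∀ n : Fin m →₀ ℕ, (∑ j, n j) ≤ p → MvPowerSeries.coeff n F = MvPowerSeries.coeff n G

/-- Two multivariate power series agree in total degree `p`: their coefficients at every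
multi-exponent of total degree `p` coincide. -/
def AgreeAt (m p : ℕ) (F G : MvPowerSeries (Fin m) ℚ) : Prop :=
  ∀ n : Fin m →₀ ℕ, (∑ j, n j) = p → MvPowerSeries.coeff n F = MvPowerSeries.coeff n G


lemma coeff_substAt {m : ℕ} (j : Fin m) (f : PowerSeries ℚ) (n : Fin m →₀ ℕ) :
    MvPowerSeries.coeff n (substAt j f) =
      if n.support ⊆ {j} then PowerSeries.coeff (n j) f else 0 := rfl

lemma coeff_substAt_single {m : ℕ} (j : Fin m) (f : PowerSeries ℚ) (k : ℕ) :
    MvPowerSeries.coeff (Finsupp.single j k) (substAt j f) = PowerSeries.coeff k f := by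
  rw [coeff_substAt, if_pos Finsupp.support_single_subset, Finsupp.single_eq_same]

lemma substAt_mul {m : ℕ} (j : Fin m) (f g : PowerSeries ℚ) :
    substAt j (f * g) = substAt j f * substAt j g := by
  ext n
  rw [MvPowerSeries.coeff_mul, coeff_substAt]
  by_cases hn : n.support ⊆ {j}
  · rw [if_pos hn]
    obtain ⟨k, hk⟩ := Finsupp.support_subset_singleton'.mp hn
    subst hk
    rw [Finsupp.single_eq_same, PowerSeries.coeff_mul, Finsupp.antidiagonal_single,
      Finset.sum_map]
    refine Finset.sum_congr rfl fun p _ => ?_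
    simp [coeff_substAt_single]
  · rw [if_neg hn]
    symm
    refine Finset.sum_eq_zero fun p hp => ?_
    rw [Finset.HasAntidiagonal.mem_antidiagonal] at hp
    by_cases h1 : p.1.support ⊆ {j}
    · by_cases h2 : p.2.support ⊆ {j}
      · exact absurd (hp ▸ (Finsupp.support_add.trans (Finset.union_subset h1 h2))) hn
      · rw [coeff_substAt j g, if_neg h2, mul_zero]
    · rw [coeff_substAt, if_neg h1, zero_mul]

lemma substAt_one {m : ℕ} (j : Fin m) : substAt j 1 = 1 := by
  ext n
  rw [coeff_substAt, MvPowerSeries.coeff_one]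
  by_cases hn : n.support ⊆ {j}
  · obtain ⟨k, hk⟩ := Finsupp.support_subset_singleton'.mp hn
    subst hk
    rw [if_pos hn, Finsupp.single_eq_same, PowerSeries.coeff_one]
    simp [Finsupp.single_eq_zero]
  · rw [if_neg hn, if_neg]
    rintro rfl
    simp at hn

lemma substAt_sub {m : ℕ} (j : Fin m) (f g : PowerSeries ℚ) :
    substAt j (f - g) = substAt j f - substAt j g := by
  ext n
  rw [map_sub, coeff_substAt, coeff_substAt, coeff_substAt]
  split_ifs with hn
  · rw [map_sub]
  · rw [sub_zero]

lemma substAt_X {m : ℕ} (j : Fin m) : substAt j PowerSeries.X = MvPowerSeries.X j := by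
  ext n
  rw [coeff_substAt, MvPowerSeries.coeff_X]
  by_cases hn : n.support ⊆ {j}
  · obtain ⟨k, hk⟩ := Finsupp.support_subset_singleton'.mp hn
    subst hk
    rw [if_pos hn, Finsupp.single_eq_same, PowerSeries.coeff_X]
    by_cases hk1 : k = 1
    · subst hk1; simp
    · rw [if_neg hk1, if_neg (by simp [Finsupp.single_eq_single_iff, hk1])]
  · rw [if_neg hn, if_neg]
    rintro rfl
    exact hn Finsupp.support_single_subset

lemma prod_one_sub {R : Type*} [CommRing R] {ι : Type*} [DecidableEq ι] (A : Finset ι) (y : ι → R) :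
    ∏ k ∈ A, (1 - y k) = ∑ t ∈ A.powerset, (-1 : R) ^ t.card * ∏ k ∈ t, y k := by
  have h : ∀ k ∈ A, (1 : R) - y k = -y k + 1 := fun k _ => by ring
  rw [Finset.prod_congr rfl h, Finset.prod_add]
  refine Finset.sum_congr rfl fun t _ => ?_
  rw [Finset.prod_const_one, mul_one]
  calc ∏ k ∈ t, -y k = ∏ k ∈ t, (-1 : R) * y k := by simp only [neg_one_mul]
  _ = (-1 : R) ^ t.card * ∏ k ∈ t, y k := by rw [Finset.prod_mul_distrib, Finset.prod_const]

lemma lemA {R : Type*} [CommRing R] (m : ℕ) (y : Fin m → R) :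
    ∑ r ∈ Icc 1 m, (-1 : R) ^ r * (r : R) *
        ∑ S ∈ powersetCard r (univ : Finset (Fin m)), ∏ j ∈ S, y j
      = -∑ j : Fin m, y j * ∏ k ∈ univ.erase j, (1 - y k) := by
  have h1 : ∑ S ∈ (univ : Finset (Fin m)).powerset,
        (-1 : R) ^ S.card * (S.card : R) * ∏ j ∈ S, y j
      = ∑ r ∈ range (m + 1), ∑ S ∈ powersetCard r (univ : Finset (Fin m)),
          (-1 : R) ^ S.card * (S.card : R) * ∏ j ∈ S, y j := by
    rw [Finset.powerset_card_disjiUnion]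
    refine (Finset.sum_disjiUnion _ _ _).trans ?_
    rw [Finset.card_univ, Fintype.card_fin]
  have h2 : ∀ r : ℕ, ∑ S ∈ powersetCard r (univ : Finset (Fin m)),
        (-1 : R) ^ S.card * (S.card : R) * ∏ j ∈ S, y j
      = (-1 : R) ^ r * (r : R) * ∑ S ∈ powersetCard r (univ : Finset (Fin m)), ∏ j ∈ S, y j := by
    intro r
    rw [Finset.mul_sum]
    refine Finset.sum_congr rfl fun S hS => ?_
    rw [(Finset.mem_powersetCard.mp hS).2]
  have h3 : ∑ r ∈ range (m + 1),
        (-1 : R) ^ r * (r : R) * ∑ S ∈ powersetCard r (univ : Finset (Fin m)), ∏ j ∈ S, y j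
      = ∑ r ∈ Icc 1 m,
        (-1 : R) ^ r * (r : R) * ∑ S ∈ powersetCard r (univ : Finset (Fin m)), ∏ j ∈ S, y j := by
    rw [Finset.range_eq_Ico, Finset.sum_eq_sum_Ico_succ_bot (Nat.succ_pos m),
      Nat.succ_eq_add_one, Finset.Ico_add_one_right_eq_Icc]
    simp
  have h4 : ∑ S ∈ (univ : Finset (Fin m)).powerset,
        (-1 : R) ^ S.card * (S.card : R) * ∏ j ∈ S, y j
      = -∑ j : Fin m, y j * ∏ k ∈ univ.erase j, (1 - y k) := by
    have hL : ∀ S : Finset (Fin m), (-1 : R) ^ S.card * (S.card : R) * ∏ j ∈ S, y j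
        = ∑ j ∈ S, (-1 : R) ^ S.card * ∏ k ∈ S, y k := by
      intro S
      rw [Finset.sum_const, nsmul_eq_mul]
      ring
    have hR : ∀ j : Fin m, y j * ∏ k ∈ univ.erase j, (1 - y k)
        = ∑ t ∈ (univ.erase j).powerset, y j * ((-1 : R) ^ t.card * ∏ k ∈ t, y k) := by
      intro j
      rw [prod_one_sub, Finset.mul_sum]
    rw [Finset.sum_congr rfl fun S _ => hL S, Finset.sum_congr rfl fun j _ => hR j,
      ← Finset.sum_neg_distrib]
    simp only [← Finset.sum_neg_distrib]
    rw [Finset.sum_sigma', Finset.sum_sigma']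
    refine Finset.sum_nbij' (fun p => ⟨p.2, p.1.erase p.2⟩) (fun p => ⟨insert p.1 p.2, p.1⟩)
      ?_ ?_ ?_ ?_ ?_
    · rintro ⟨S, j⟩ hp
      rw [Finset.mem_sigma] at hp ⊢
      exact ⟨Finset.mem_univ _, Finset.mem_powerset.mpr
        (Finset.erase_subset_erase _ (Finset.mem_powerset.mp hp.1))⟩
    · rintro ⟨j, t⟩ hp
      rw [Finset.mem_sigma] at hp ⊢
      exact ⟨Finset.mem_powerset.mpr (Finset.insert_subset_iff.mpr
        ⟨Finset.mem_univ _, (Finset.mem_powerset.mp hp.2).trans (Finset.erase_subset _ _)⟩),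
        Finset.mem_insert_self _ _⟩
    · rintro ⟨S, j⟩ hp
      rw [Finset.mem_sigma] at hp
      simp [Finset.insert_erase hp.2]
    · rintro ⟨j, t⟩ hp
      rw [Finset.mem_sigma] at hp
      have hjt : j ∉ t := fun hj =>
        Finset.notMem_erase j univ ((Finset.mem_powerset.mp hp.2) hj)
      simp [Finset.erase_insert hjt]
    · rintro ⟨S, j⟩ hp
      rw [Finset.mem_sigma] at hp
      have hc : (S.erase j).card + 1 = S.card := Finset.card_erase_add_one hp.2
      dsimp only
      rw [← hc, pow_succ, ← Finset.mul_prod_erase S y hp.2]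
      ring
  rw [← h3, Finset.sum_congr rfl fun r _ => (h2 r).symm, ← h1, h4]

lemma expNeg_eq : expNeg = PowerSeries.evalNegHom (PowerSeries.exp ℚ) := by
  ext n
  simp [expNeg, PowerSeries.evalNegHom, PowerSeries.coeff_rescale, PowerSeries.coeff_exp,
    PowerSeries.coeff_mk, div_eq_mul_inv, mul_comm]

lemma exp_mul_expNeg : PowerSeries.exp ℚ * expNeg = 1 := by
  rw [expNeg_eq]; exact PowerSeries.exp_mul_exp_neg_eq_one

/-- `Td · (Σ_{r=1}^m (−1)^r · r · ch_r) = − Σ_{j=1}^m (∏_{k ≠ j} X_k) · h(X_j)`,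
where `h = X/(e^X − 1)` is the Bernoulli generating series. -/
theorem td_mul_weighted_sum_ch_eq (m : ℕ) (φ : PowerSeries ℚ)
    (hφ : φ * (1 - expNeg) = PowerSeries.X)
    (h : PowerSeries ℚ) (hh : h * (PowerSeries.exp ℚ - 1) = PowerSeries.X) :
    Td m φ * ∑ r ∈ Finset.Icc 1 m,
        (-1 : MvPowerSeries (Fin m) ℚ) ^ r * (r : MvPowerSeries (Fin m) ℚ) * ch m r
      = -∑ j : Fin m,
          (∏ k ∈ Finset.univ.erase j, MvPowerSeries.X k) * substAt j h := by
  classical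
  have hEh : φ * expNeg = h := by
    have hne : (PowerSeries.exp ℚ - 1 : PowerSeries ℚ) ≠ 0 := by
      intro e
      have h1 := congrArg (PowerSeries.coeff 1) e
      simp [PowerSeries.coeff_exp] at h1
    apply mul_right_cancel₀ hne
    calc φ * expNeg * (PowerSeries.exp ℚ - 1)
        = φ * (PowerSeries.exp ℚ * expNeg - expNeg) := by ring
      _ = φ * (1 - expNeg) := by rw [exp_mul_expNeg]
      _ = PowerSeries.X := hφ
      _ = h * (PowerSeries.exp ℚ - 1) := hh.symm
  have hXk : ∀ k : Fin m, substAt k φ * (1 - substAt k expNeg) = MvPowerSeries.X k := by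
    intro k
    have h2 := congrArg (substAt k) hφ
    rwa [substAt_mul, substAt_sub, substAt_one, substAt_X] at h2
  have hkey : ∀ j : Fin m,
      Td m φ * (substAt j expNeg * ∏ k ∈ univ.erase j, (1 - substAt k expNeg))
        = (∏ k ∈ univ.erase j, MvPowerSeries.X k) * substAt j h := by
    intro j
    have hTd : Td m φ = substAt j φ * ∏ k ∈ univ.erase j, substAt k φ :=
      (Finset.mul_prod_erase univ _ (Finset.mem_univ j)).symm
    calc Td m φ * (substAt j expNeg * ∏ k ∈ univ.erase j, (1 - substAt k expNeg))
        = (substAt j φ * substAt j expNeg) *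
            ∏ k ∈ univ.erase j, (substAt k φ * (1 - substAt k expNeg)) := by
          rw [hTd, Finset.prod_mul_distrib]; ring
      _ = substAt j h * ∏ k ∈ univ.erase j, MvPowerSeries.X k := by
          rw [← substAt_mul, hEh, Finset.prod_congr rfl fun k _ => hXk k]
      _ = (∏ k ∈ univ.erase j, MvPowerSeries.X k) * substAt j h := mul_comm _ _
  have hA := lemA m (fun j : Fin m => substAt j expNeg)
  simp only [ch]
  rw [hA, mul_neg, Finset.mul_sum]
  exact neg_inj.mpr (Finset.sum_congr rfl fun j _ => hkey j)
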